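/- For all natural numbers b, c, m: if m is not a gap in b ⊕ c, then the position (0, b, c) has a one-move successor with Sprague–Grundy value m; equivalently, there exists b' < b with b' ⊕ c = m or there exists c' < c with b ⊕ c' = m. -/

import Mathlib

noncomputable def N3 (a b c : ℕ) : ℕ :=
  sInf {m : ℕ |
    (∀ a', a' < a → N3 a' b c ≠ m) ∧
    (∀ b', b' < b → N3 a b' c ≠ m) ∧
    (∀ c', c' < c → N3 a b c' ≠ m) ∧
    (∀ a', a' < a → ∀ b', b' < b → N3 a' b' c ≠ m) ∧
    (∀ a', a' < a → ∀ c', c' < c → N3 a' b c' ≠ m)}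
termination_by a + b + c
decreasing_by all_goals omega

def IsGap (b c m : ℕ) : Prop :=
  m = b ^^^ c ∨
  ∃ i : ℕ, (∀ j, i < j → m.testBit j = (b ^^^ c).testBit j) ∧
    m.testBit i ≠ (b ^^^ c).testBit i ∧
    m.testBit i = true ∧ b.testBit i = false ∧ c.testBit i = false

lemma moveA (b c m i : ℕ) (hj : ∀ j, i < j → m.testBit j = (b ^^^ c).testBit j)
    (hi : m.testBit i ≠ (b ^^^ c).testBit i) (hb : b.testBit i = true) :
    m ^^^ c < b ∧ (m ^^^ c) ^^^ c = m := by
  constructor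
  · apply Nat.lt_of_testBit i
    · revert hi
      simp only [Nat.testBit_xor, hb]
      cases m.testBit i <;> cases c.testBit i <;> simp
    · exact hb
    · intro j hjlt
      have := hj j hjlt
      simp only [Nat.testBit_xor] at this ⊢
      rw [this]
      cases b.testBit j <;> cases c.testBit j <;> simp
  · rw [Nat.xor_assoc, Nat.xor_self, Nat.xor_zero]

lemma move_exists (b c m i : ℕ)
    (hj : ∀ j, i < j → m.testBit j = (b ^^^ c).testBit j)
    (hi : m.testBit i ≠ (b ^^^ c).testBit i)
    (hbc : b.testBit i = true ∨ c.testBit i = true) :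
    (∃ b' < b, b' ^^^ c = m) ∨ (∃ c' < c, b ^^^ c' = m) := by
  rcases hbc with hb | hc
  · obtain ⟨h1, h2⟩ := moveA b c m i hj hi hb
    exact Or.inl ⟨m ^^^ c, h1, h2⟩
  · have hj' : ∀ j, i < j → m.testBit j = (c ^^^ b).testBit j := by
      intro j hlt; rw [Nat.xor_comm]; exact hj j hlt
    have hi' : m.testBit i ≠ (c ^^^ b).testBit i := by
      rw [Nat.xor_comm]; exact hi
    obtain ⟨h1, _⟩ := moveA c b m i hj' hi' hc
    exact Or.inr ⟨m ^^^ b, h1, by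
      rw [Nat.xor_comm, Nat.xor_assoc, Nat.xor_self, Nat.xor_zero]⟩

/-- Highest differing bit between `m` and `x`, when `m ≠ x`. -/
lemma exists_high_diff {m x : ℕ} (h : m ≠ x) :
    ∃ i, (∀ j, i < j → m.testBit j = x.testBit j) ∧ m.testBit i ≠ x.testBit i := by
  have hd : m ^^^ x ≠ 0 := by
    intro h0
    exact h (Nat.xor_eq_zero_iff.mp h0)
  obtain ⟨i, hi, hup⟩ := Nat.exists_most_significant_bit hd
  refine ⟨i, fun j hj => ?_, ?_⟩
  · have := hup j hj
    simp only [Nat.testBit_xor] at this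
    cases hm : m.testBit j <;> cases hx : x.testBit j <;> simp_all
  · simp only [Nat.testBit_xor] at hi
    cases hm : m.testBit i <;> cases hx : x.testBit i <;> simp_all

lemma N3_zero_aux : ∀ n b c, b + c ≤ n → N3 0 b c = b ^^^ c := by
  intro n
  induction n with
  | zero =>
    intro b c h
    have hb : b = 0 := by omega
    have hc : c = 0 := by omega
    subst hb; subst hc
    rw [N3]
    have : {m : ℕ |
        (∀ a', a' < 0 → N3 a' 0 0 ≠ m) ∧
        (∀ b', b' < 0 → N3 0 b' 0 ≠ m) ∧
        (∀ c', c' < 0 → N3 0 0 c' ≠ m) ∧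
        (∀ a', a' < 0 → ∀ b', b' < 0 → N3 a' b' 0 ≠ m) ∧
        (∀ a', a' < 0 → ∀ c', c' < 0 → N3 a' 0 c' ≠ m)} = Set.univ := by
      ext m; simp
    rw [this]
    simp [Nat.sInf_eq_zero]
  | succ n IH =>
    intro b c hbc
    rw [N3]
    set S := {m : ℕ |
        (∀ a', a' < 0 → N3 a' b c ≠ m) ∧
        (∀ b', b' < b → N3 0 b' c ≠ m) ∧
        (∀ c', c' < c → N3 0 b c' ≠ m) ∧
        (∀ a', a' < 0 → ∀ b', b' < b → N3 a' b' c ≠ m) ∧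
        (∀ a', a' < 0 → ∀ c', c' < c → N3 a' b c' ≠ m)} with hSdef
    have hmem : b ^^^ c ∈ S := by
      refine ⟨fun a' h => absurd h (Nat.not_lt_zero _), ?_, ?_,
        fun a' h => absurd h (Nat.not_lt_zero _), fun a' h => absurd h (Nat.not_lt_zero _)⟩
      · intro b' hb'
        rw [IH b' c (by omega)]
        intro he
        have : b' = b := by
          have := congrArg (· ^^^ c) he
          simpa [Nat.xor_assoc] using this
        omega
      · intro c' hc'
        rw [IH b c' (by omega)]
        intro he
        have : c' = c := by
          have := congrArg (b ^^^ ·) he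
          simpa [← Nat.xor_assoc] using this
        omega
    apply le_antisymm (Nat.sInf_le hmem)
    by_contra hlt
    push_neg at hlt
    have hS : sInf S ∈ S := Nat.sInf_mem ⟨_, hmem⟩
    set k := sInf S with hk
    have hne : k ≠ b ^^^ c := Nat.ne_of_lt hlt
    obtain ⟨i, hup, hdiff⟩ := exists_high_diff hne
    have hxc : (b ^^^ c).testBit i = true := by
      by_contra hx
      simp only [Bool.not_eq_true] at hx
      have hkm : k.testBit i = true := by
        cases hm : k.testBit i
        · exact absurd (hm.trans hx.symm) hdiff
        · rfl
      have : b ^^^ c < k := Nat.lt_of_testBit i hx hkm (fun j hj => (hup j hj).symm)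
      omega
    have hbc' : b.testBit i = true ∨ c.testBit i = true := by
      rw [Nat.testBit_xor] at hxc
      cases hb : b.testBit i <;> cases hc : c.testBit i <;> simp_all
    rcases move_exists b c k i hup hdiff hbc' with ⟨b', hb', he⟩ | ⟨c', hc', he⟩
    · exact hS.2.1 b' hb' (by rw [IH b' c (by omega)]; exact he)
    · exact hS.2.2.1 c' hc' (by rw [IH b c' (by omega)]; exact he)

lemma N3_zero (b c : ℕ) : N3 0 b c = b ^^^ c := N3_zero_aux (b + c) b c le_rfl

theorem nongap_attainable (b c m : ℕ) (h : ¬ IsGap b c m) :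
    (∃ b' < b, N3 0 b' c = m) ∨ (∃ c' < c, N3 0 b c' = m) := by
  rw [IsGap] at h
  push_neg at h
  obtain ⟨hne, hgap⟩ := h
  obtain ⟨i, hup, hdiff⟩ := exists_high_diff hne
  have hbc : b.testBit i = true ∨ c.testBit i = true := by
    cases hm : m.testBit i
    · have hx : (b ^^^ c).testBit i = true := by
        cases hx : (b ^^^ c).testBit i
        · exact absurd (hm.trans hx.symm) hdiff
        · rfl
      rw [Nat.testBit_xor] at hx
      cases hb : b.testBit i <;> cases hc : c.testBit i <;> simp_all
    · have := hgap i hup hdiff hm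
      cases hb : b.testBit i
      · right
        cases hc : c.testBit i
        · exact absurd hc (this hb)
        · rfl
      · left; rfl
  rcases move_exists b c m i hup hdiff hbc with ⟨b', hb', he⟩ | ⟨c', hc', he⟩
  · exact Or.inl ⟨b', hb', by rw [N3_zero]; exact he⟩
  · exact Or.inr ⟨c', hc', by rw [N3_zero]; exact he⟩
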